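/- Let (Ω,Σ) be a measurable space, and let 𝔭, 𝔮 be probability measures on Ω with 𝔭 ≪ 𝔮 and H := H(𝔭|𝔮) < ∞. Let h : Ω → (0,∞) be measurable and let p, q > 0 be real exponents such that ∫ h^q d𝔮 < ∞ and ∫ h^{−p} d𝔮 < ∞. Then log h ∈ L¹(𝔭), and ∫ |log h| d𝔭 ≤ (2·e^{H−1}/min(p,q)) · max( 1, log₂( ‖h‖_{L^q(𝔮)}^{min(p,q)} + ‖h^{−1}‖_{L^p(𝔮)}^{min(p,q)} ) ). -/

import Mathlib

open MeasureTheory Real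

lemma young_ineq (s t : ℝ) (hs : 0 ≤ s) : s * t ≤ s * Real.log s - s + Real.exp t := by
  rcases eq_or_lt_of_le hs with h0 | h0
  · simpa [← h0] using (Real.exp_pos t).le
  · have h1 := Real.add_one_le_exp (t - Real.log s)
    have h2 : Real.exp (t - Real.log s) = Real.exp t / s := by
      rw [Real.exp_sub, Real.exp_log h0]
    rw [h2] at h1
    have h3 := mul_le_mul_of_nonneg_left h1 hs
    have h4 : s * (Real.exp t / s) = Real.exp t := by field_simp
    nlinarith

lemma jensen_rpow {Ω : Type*} [MeasurableSpace Ω] (𝔮 : Measure Ω) [IsProbabilityMeasure 𝔮]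
    {u : Ω → ℝ} (hu : Measurable u) (hunn : ∀ x, 0 ≤ u x) {r s : ℝ} (hr : 0 < r) (hrs : r ≤ s)
    (hint : Integrable (fun x => u x ^ s) 𝔮) :
    ∫ x, u x ^ r ∂𝔮 ≤ (∫ x, u x ^ s ∂𝔮) ^ (r / s) := by
  rcases eq_or_lt_of_le hrs with he | hlt
  · subst he; rw [div_self hr.ne', Real.rpow_one]
  · have hs : 0 < s := hr.trans hlt
    set P := s / r with hPdef
    have hP1 : 1 < P := (one_lt_div hr).2 hlt
    have hP0 : 0 < P := lt_trans one_pos hP1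
    have hrP : r * P = s := by rw [hPdef]; field_simp
    have hconj : P.HolderConjugate (P / (P - 1)) := by
      refine Real.holderConjugate_iff.2 ⟨hP1, ?_⟩
      have h1 : P - 1 ≠ 0 := by linarith
      field_simp
      ring
    have hne0 : ENNReal.ofReal P ≠ 0 := by
      simp [ENNReal.ofReal_eq_zero, not_le, hP0]
    have hnetop : ENNReal.ofReal P ≠ ⊤ := ENNReal.ofReal_ne_top
    have hae : AEStronglyMeasurable (fun x => u x ^ r) 𝔮 :=
      (hu.pow_const r).aestronglyMeasurable
    have heq : (fun x => u x ^ s) = (fun x => ‖u x ^ r‖ ^ (ENNReal.ofReal P).toReal) := by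
      funext x
      rw [ENNReal.toReal_ofReal hP0.le, Real.norm_of_nonneg (Real.rpow_nonneg (hunn x) r),
        ← Real.rpow_mul (hunn x), hrP]
    have key : MemLp (fun x => u x ^ r) (ENNReal.ofReal P) 𝔮 := by
      have hiff := memLp_norm_rpow_iff (q := ENNReal.ofReal P) (p := ENNReal.ofReal P) hae hne0 hnetop
      rw [ENNReal.div_self hne0 hnetop] at hiff
      rw [← hiff, memLp_one_iff_integrable]
      exact hint.congr (Filter.Eventually.of_forall fun x => congrFun heq x)
    have hone : MemLp (fun _ : Ω => (1 : ℝ)) (ENNReal.ofReal (P / (P - 1))) 𝔮 := memLp_const 1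
    have hold := integral_mul_le_Lp_mul_Lq_of_nonneg hconj
      (Filter.Eventually.of_forall fun x => Real.rpow_nonneg (hunn x) r)
      (Filter.Eventually.of_forall fun _ => zero_le_one) key hone
    have h1 : ∫ x, (u x ^ r) ^ P ∂𝔮 = ∫ x, u x ^ s ∂𝔮 := by
      refine integral_congr_ae (Filter.Eventually.of_forall fun x => ?_)
      show (u x ^ r) ^ P = u x ^ s
      rw [← Real.rpow_mul (hunn x), hrP]
    have h2 : (∫ _ : Ω, (1 : ℝ) ∂𝔮) = 1 := by simp
    simp only [mul_one, Real.one_rpow] at hold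
    rw [h1, h2, Real.one_rpow, mul_one] at hold
    have hexp : (1 : ℝ) / P = r / s := by rw [hPdef, one_div_div]
    rwa [hexp] at hold

/-- Lemma on log-integrability, eq. (bound:L1:no:measure).
If `𝔭 ≪ 𝔮` are probability measures with finite relative entropy
`H = ∫ log (d𝔭/d𝔮) d𝔭`, `h` is a positive measurable function with
`h ∈ L^q(𝔮)` and `h⁻¹ ∈ L^p(𝔮)` for some `p, q > 0`, then `log h ∈ L¹(𝔭)` with
`∫ |log h| d𝔭 ≤ (2 e^{H-1} / min(p,q)) · max(1, log₂(‖h‖_q^{min(p,q)} + ‖h⁻¹‖_p^{min(p,q)}))`. -/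
theorem log_integrability_bound_no_measure
    {Ω : Type*} [MeasurableSpace Ω]
    (𝔭 𝔮 : Measure Ω) [IsProbabilityMeasure 𝔭] [IsProbabilityMeasure 𝔮]
    (hac : 𝔭 ≪ 𝔮)
    (hH : Integrable (fun x => Real.log ((𝔭.rnDeriv 𝔮 x).toReal)) 𝔭)
    (h : Ω → ℝ) (hmeas : Measurable h) (hpos : ∀ x, 0 < h x)
    (p q : ℝ) (hp : 0 < p) (hq : 0 < q)
    (hhq : Integrable (fun x => h x ^ q) 𝔮)
    (hhp : Integrable (fun x => h x ^ (-p)) 𝔮) :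
    Integrable (fun x => Real.log (h x)) 𝔭 ∧
    ∫ x, |Real.log (h x)| ∂𝔭 ≤
      2 * Real.exp ((∫ x, Real.log ((𝔭.rnDeriv 𝔮 x).toReal) ∂𝔭) - 1) / min p q *
        max 1
          (Real.logb 2
            (((∫ x, h x ^ q ∂𝔮) ^ (1 / q)) ^ min p q
              + ((∫ x, h x ^ (-p) ∂𝔮) ^ (1 / p)) ^ min p q)) := by
  set r := min p q with hrdef
  have hr : 0 < r := lt_min hp hq
  have hrq : r ≤ q := min_le_right p q
  have hrp : r ≤ p := min_le_left p q
  have hρmeas : Measurable (fun x => (𝔭.rnDeriv 𝔮 x).toReal) :=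
    (Measure.measurable_rnDeriv 𝔭 𝔮).ennreal_toReal
  have hmr : ∀ t : ℝ, Measurable fun x => h x ^ t := fun t => by measurability
  have hgm0 : Measurable fun x => |Real.log (h x)| := (Real.measurable_log.comp hmeas).abs
  have hρnn : ∀ x, 0 ≤ (𝔭.rnDeriv 𝔮 x).toReal := fun x => ENNReal.toReal_nonneg
  -- integrability of h^r and h^(-r)
  have hhr : Integrable (fun x => h x ^ r) 𝔮 := by
    refine (hhq.add (integrable_const 1)).mono' ((hmr r).aestronglyMeasurable)
      (Filter.Eventually.of_forall fun x => ?_)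
    rw [Real.norm_of_nonneg (Real.rpow_nonneg (hpos x).le r)]
    have h2 : (0:ℝ) ≤ h x ^ q := Real.rpow_nonneg (hpos x).le q
    rcases le_or_gt 1 (h x) with h1 | h1
    · have := Real.rpow_le_rpow_of_exponent_le h1 hrq
      simp only [Pi.add_apply]
      linarith
    · have := Real.rpow_le_one (hpos x).le h1.le hr.le
      simp only [Pi.add_apply]
      linarith
  have hhnr : Integrable (fun x => h x ^ (-r)) 𝔮 := by
    refine (hhp.add (integrable_const 1)).mono' ((hmr (-r)).aestronglyMeasurable)
      (Filter.Eventually.of_forall fun x => ?_)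
    rw [Real.norm_of_nonneg (Real.rpow_nonneg (hpos x).le _)]
    have h2 : (0:ℝ) ≤ h x ^ (-p) := Real.rpow_nonneg (hpos x).le _
    rcases le_or_gt 1 (h x) with h1 | h1
    · have := Real.rpow_le_one_of_one_le_of_nonpos h1 (neg_nonpos.mpr hr.le)
      simp only [Pi.add_apply]
      linarith
    · have := Real.rpow_le_rpow_of_exponent_ge (hpos x) h1.le (neg_le_neg hrp)
      simp only [Pi.add_apply]
      linarith
  have hsum : Integrable (fun x => h x ^ r + h x ^ (-r)) 𝔮 := hhr.add hhnr
  set K := ∫ x, (h x ^ r + h x ^ (-r)) ∂𝔮 with hKdef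
  have hK2 : (2:ℝ) ≤ K := by
    have h2 : ∫ _ : Ω, (2:ℝ) ∂𝔮 = 2 := by simp
    rw [hKdef, ← h2]
    refine integral_mono (integrable_const 2) hsum fun x => ?_
    have ha : 0 < h x ^ r := Real.rpow_pos_of_pos (hpos x) r
    have hinv : h x ^ (-r) = (h x ^ r)⁻¹ := by rw [Real.rpow_neg (hpos x).le]
    rw [hinv]
    have h1 : h x ^ r * (h x ^ r)⁻¹ = 1 := mul_inv_cancel₀ ha.ne'
    nlinarith [sq_nonneg (h x ^ r - 1)]
  have hK0 : (0:ℝ) < K := lt_of_lt_of_le two_pos hK2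
  set g : Ω → ℝ := fun x => r * |Real.log (h x)| with hgdef
  have hgm : Measurable g := measurable_const.mul hgm0
  have hgnn : ∀ x, 0 ≤ g x := fun x => mul_nonneg hr.le (abs_nonneg _)
  have hexpg : ∀ x, Real.exp (g x) ≤ h x ^ r + h x ^ (-r) := by
    intro x
    have hpr : 0 < h x ^ r := Real.rpow_pos_of_pos (hpos x) r
    have hpnr : 0 < h x ^ (-r) := Real.rpow_pos_of_pos (hpos x) (-r)
    rcases le_or_gt 0 (Real.log (h x)) with hl | hl
    · have heq : Real.exp (g x) = h x ^ r := by
        rw [hgdef]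
        simp only
        rw [abs_of_nonneg hl, Real.rpow_def_of_pos (hpos x), mul_comm]
      rw [heq]; linarith
    · have heq : Real.exp (g x) = h x ^ (-r) := by
        rw [hgdef]
        simp only
        rw [abs_of_neg hl, Real.rpow_def_of_pos (hpos x)]
        ring_nf
      rw [heq]; linarith
  -- integrability of the components over 𝔮
  have i1 : Integrable (fun x => (𝔭.rnDeriv 𝔮 x).toReal * Real.log ((𝔭.rnDeriv 𝔮 x).toReal)) 𝔮 := by
    have := (integrable_rnDeriv_smul_iff (E := ℝ) hac).mpr hH
    simpa [smul_eq_mul] using this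
  have i2 : Integrable (fun x => (𝔭.rnDeriv 𝔮 x).toReal) 𝔮 := Measure.integrable_toReal_rnDeriv
  have i3 : Integrable (fun x => Real.exp (g x)) 𝔮 :=
    hsum.mono' ((Real.measurable_exp.comp hgm).aestronglyMeasurable) (Filter.Eventually.of_forall fun x => by
      rw [Real.norm_of_nonneg (Real.exp_pos _).le]; exact hexpg x)
  have bound : ∀ x, (𝔭.rnDeriv 𝔮 x).toReal * g x ≤
      (𝔭.rnDeriv 𝔮 x).toReal * Real.log ((𝔭.rnDeriv 𝔮 x).toReal) - (𝔭.rnDeriv 𝔮 x).toReal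
        + Real.exp (g x) / K + (𝔭.rnDeriv 𝔮 x).toReal * Real.log K := by
    intro x
    have hy := young_ineq ((𝔭.rnDeriv 𝔮 x).toReal) (g x - Real.log K) (hρnn x)
    rw [show Real.exp (g x - Real.log K) = Real.exp (g x) / K by
      rw [Real.exp_sub, Real.exp_log hK0]] at hy
    nlinarith [hy]
  have isub : Integrable (fun x => (𝔭.rnDeriv 𝔮 x).toReal * Real.log ((𝔭.rnDeriv 𝔮 x).toReal)
      - (𝔭.rnDeriv 𝔮 x).toReal) 𝔮 := i1.sub i2
  have isub2 : Integrable (fun x => (𝔭.rnDeriv 𝔮 x).toReal * Real.log ((𝔭.rnDeriv 𝔮 x).toReal)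
      - (𝔭.rnDeriv 𝔮 x).toReal + Real.exp (g x) / K) 𝔮 := isub.add (i3.div_const K)
  have irhs : Integrable (fun x => (𝔭.rnDeriv 𝔮 x).toReal * Real.log ((𝔭.rnDeriv 𝔮 x).toReal)
      - (𝔭.rnDeriv 𝔮 x).toReal + Real.exp (g x) / K
      + (𝔭.rnDeriv 𝔮 x).toReal * Real.log K) 𝔮 :=
    isub2.add (i2.mul_const _)
  have i5 : Integrable (fun x => (𝔭.rnDeriv 𝔮 x).toReal * g x) 𝔮 :=
    irhs.mono' ((hρmeas.mul hgm).aestronglyMeasurable) (Filter.Eventually.of_forall fun x => by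
      rw [Real.norm_of_nonneg (mul_nonneg (hρnn x) (hgnn x))]; exact bound x)
  have ig𝔭 : Integrable g 𝔭 := by
    refine (integrable_rnDeriv_smul_iff (E := ℝ) hac).mp ?_
    simpa [smul_eq_mul] using i5
  have habs : Integrable (fun x => |Real.log (h x)|) 𝔭 := by
    have h1 := ig𝔭.const_mul r⁻¹
    refine h1.congr (Filter.Eventually.of_forall fun x => ?_)
    rw [hgdef]
    simp only
    field_simp
  have ilog : Integrable (fun x => Real.log (h x)) 𝔭 :=
    habs.mono' ((Real.measurable_log.comp hmeas).aestronglyMeasurable)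
      (Filter.Eventually.of_forall fun x => le_of_eq (Real.norm_eq_abs _))
  -- integral identities
  have hint1 : ∫ x, (𝔭.rnDeriv 𝔮 x).toReal * g x ∂𝔮 = ∫ x, g x ∂𝔭 := by
    have := integral_rnDeriv_smul (f := g) hac
    simpa [smul_eq_mul] using this
  have hintH : ∫ x, (𝔭.rnDeriv 𝔮 x).toReal * Real.log ((𝔭.rnDeriv 𝔮 x).toReal) ∂𝔮
      = ∫ x, Real.log ((𝔭.rnDeriv 𝔮 x).toReal) ∂𝔭 := by
    have := integral_rnDeriv_smul (f := fun x => Real.log ((𝔭.rnDeriv 𝔮 x).toReal)) hac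
    simpa [smul_eq_mul] using this
  have hintρ : ∫ x, (𝔭.rnDeriv 𝔮 x).toReal ∂𝔮 = 1 := by
    rw [Measure.integral_toReal_rnDeriv hac]
    simp
  set H := ∫ x, Real.log ((𝔭.rnDeriv 𝔮 x).toReal) ∂𝔭 with hHdef
  have hHnn : 0 ≤ H := by
    have hnn : ∀ x, (0:ℝ) ≤ (𝔭.rnDeriv 𝔮 x).toReal * Real.log ((𝔭.rnDeriv 𝔮 x).toReal)
        - (𝔭.rnDeriv 𝔮 x).toReal + 1 := fun x => by
      have := young_ineq ((𝔭.rnDeriv 𝔮 x).toReal) 0 (hρnn x)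
      simp only [mul_zero, Real.exp_zero] at this
      linarith
    have h0 : 0 ≤ ∫ x, ((𝔭.rnDeriv 𝔮 x).toReal * Real.log ((𝔭.rnDeriv 𝔮 x).toReal)
        - (𝔭.rnDeriv 𝔮 x).toReal + 1) ∂𝔮 := integral_nonneg hnn
    rw [integral_add isub (integrable_const 1), integral_sub i1 i2, hintρ, hintH] at h0
    simp only [integral_const, measure_univ, ENNReal.toReal_one, probReal_univ, smul_eq_mul, one_mul] at h0
    linarith
  have hexpint : ∫ x, Real.exp (g x) ∂𝔮 ≤ K := by
    rw [hKdef]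
    exact integral_mono i3 hsum hexpg
  have hmain : r * ∫ x, |Real.log (h x)| ∂𝔭 ≤ H + Real.log K := by
    have e1 : ∫ x, g x ∂𝔭 = r * ∫ x, |Real.log (h x)| ∂𝔭 := by
      rw [hgdef]
      exact integral_const_mul r _
    have step := integral_mono i5 irhs bound
    rw [hint1, integral_add isub2 (i2.mul_const _),
      integral_add isub (i3.div_const K), integral_sub i1 i2, hintρ, hintH,
      integral_div, integral_mul_const, hintρ] at step
    have hdiv : (∫ x, Real.exp (g x) ∂𝔮) / K ≤ 1 := by
      rw [div_le_one hK0]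
      exact hexpint
    rw [e1] at step
    linarith
  -- Jensen bounds
  have hJq : ∫ x, h x ^ r ∂𝔮 ≤ (∫ x, h x ^ q ∂𝔮) ^ (r/q) :=
    jensen_rpow 𝔮 hmeas (fun x => (hpos x).le) hr hrq hhq
  have hJp : ∫ x, h x ^ (-r) ∂𝔮 ≤ (∫ x, h x ^ (-p) ∂𝔮) ^ (r/p) := by
    have hu : Measurable fun x => (h x)⁻¹ := hmeas.inv
    have hunn : ∀ x, 0 ≤ (h x)⁻¹ := fun x => (inv_pos.mpr (hpos x)).le
    have e1 : ∀ (t : ℝ) (x : Ω), h x ^ (-t) = (h x)⁻¹ ^ t := fun t x => by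
      rw [Real.inv_rpow (hpos x).le, Real.rpow_neg (hpos x).le]
    have hint' : Integrable (fun x => (h x)⁻¹ ^ p) 𝔮 :=
      hhp.congr (Filter.Eventually.of_forall fun x => e1 p x)
    have hres := jensen_rpow 𝔮 hu hunn hr hrp hint'
    calc ∫ x, h x ^ (-r) ∂𝔮 = ∫ x, (h x)⁻¹ ^ r ∂𝔮 :=
          integral_congr_ae (Filter.Eventually.of_forall fun x => e1 r x)
      _ ≤ (∫ x, (h x)⁻¹ ^ p ∂𝔮) ^ (r/p) := hres
      _ = (∫ x, h x ^ (-p) ∂𝔮) ^ (r/p) := by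
          rw [integral_congr_ae (Filter.Eventually.of_forall fun x => (e1 p x).symm)]
  set S := ((∫ x, h x ^ q ∂𝔮) ^ (1/q)) ^ r + ((∫ x, h x ^ (-p) ∂𝔮) ^ (1/p)) ^ r with hSdef
  have hAq : ((∫ x, h x ^ q ∂𝔮) ^ (1/q)) ^ r = (∫ x, h x ^ q ∂𝔮) ^ (r/q) := by
    rw [← Real.rpow_mul (integral_nonneg fun x => Real.rpow_nonneg (hpos x).le q),
      one_div_mul_eq_div]
  have hAp : ((∫ x, h x ^ (-p) ∂𝔮) ^ (1/p)) ^ r = (∫ x, h x ^ (-p) ∂𝔮) ^ (r/p) := by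
    rw [← Real.rpow_mul (integral_nonneg fun x => Real.rpow_nonneg (hpos x).le _),
      one_div_mul_eq_div]
  have hKS : K ≤ S := by
    rw [hKdef, integral_add hhr hhnr, hSdef, hAq, hAp]
    exact add_le_add hJq hJp
  have hS2 : (2:ℝ) ≤ S := le_trans hK2 hKS
  have hS0 : (0:ℝ) < S := lt_of_lt_of_le two_pos hS2
  have hlog2 : (0:ℝ) < Real.log 2 := Real.log_pos one_lt_two
  have hLS : Real.log 2 ≤ Real.log S := Real.log_le_log two_pos hS2
  have hlogb1 : 1 ≤ Real.logb 2 S := by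
    rw [Real.logb, le_div_iff₀ hlog2, one_mul]
    exact hLS
  have hmax : max 1 (Real.logb 2 S) = Real.logb 2 S := max_eq_right hlogb1
  have hE : H + Real.log 2 ≤ 2 * Real.exp (H - 1) := by
    have h1 := Real.add_one_le_exp (H - 1 + Real.log 2)
    rw [Real.exp_add, Real.exp_log two_pos] at h1
    linarith
  have hkey : H + Real.log S ≤ 2 * Real.exp (H - 1) * Real.logb 2 S := by
    rw [Real.logb, ← mul_div_assoc, le_div_iff₀ hlog2]
    nlinarith [mul_nonneg (sub_nonneg.2 (le_trans (by linarith : Real.log 2 ≤ H + Real.log 2) hE))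
      (sub_nonneg.2 hLS)]
  refine ⟨ilog, ?_⟩
  rw [hmax]
  have final : ∫ x, |Real.log (h x)| ∂𝔭 ≤ (H + Real.log S) / r := by
    rw [le_div_iff₀ hr]
    have hKlogS : Real.log K ≤ Real.log S := Real.log_le_log hK0 hKS
    calc (∫ x, |Real.log (h x)| ∂𝔭) * r = r * ∫ x, |Real.log (h x)| ∂𝔭 := mul_comm _ _
      _ ≤ H + Real.log K := hmain
      _ ≤ H + Real.log S := by linarith
  calc ∫ x, |Real.log (h x)| ∂𝔭 ≤ (H + Real.log S) / r := final
    _ ≤ 2 * Real.exp (H - 1) * Real.logb 2 S / r := by gcongr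
    _ = 2 * Real.exp (H - 1) / r * Real.logb 2 S := by ring
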